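/- Let x₁, x₂ ∈ ℝ and set A := (Φ̄(x₁) φ(x₂)) / (φ(x₁) Φ̄(x₂)). Then, as (ε₁, ε₂) → (0,0) in ℝ², the difference Φ̄(x₁ + ε₁)/Φ̄(x₂ + ε₂) − Φ̄(x₁ + ε₁ − A ε₂)/Φ̄(x₂) is O(ε₁² + ε₂²); i.e., there exist δ > 0 and K > 0 such that whenever ε₁² + ε₂² < δ, the absolute value of this difference is at most K(ε₁² + ε₂²). -/

import Mathlib

open MeasureTheory Set

/-- The standard normal density. -/
noncomputable def stdphi (t : ℝ) : ℝ :=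
  (Real.sqrt (2 * Real.pi))⁻¹ * Real.exp (-t ^ 2 / 2)

/-- The standard normal upper-tail probability Φ̄. -/
noncomputable def Phibar (x : ℝ) : ℝ := ∫ t in Set.Ioi x, stdphi t

lemma stdphi_pos (t : ℝ) : 0 < stdphi t := by
  unfold stdphi
  positivity

lemma contDiff_stdphi : ContDiff ℝ 2 stdphi := by
  unfold stdphi
  exact contDiff_const.mul ((((contDiff_id.pow 2).neg).div_const 2).exp)

lemma integrable_stdphi : Integrable stdphi := by
  have h := (integrable_exp_neg_mul_sq (by norm_num : (0:ℝ) < 1/2)).const_mul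
      (Real.sqrt (2 * Real.pi))⁻¹
  refine h.congr ?_
  filter_upwards with t
  unfold stdphi
  ring_nf

lemma Phibar_pos (x : ℝ) : 0 < Phibar x := by
  unfold Phibar
  rw [setIntegral_pos_iff_support_of_nonneg_ae
      (Filter.Eventually.of_forall fun t => (stdphi_pos t).le)
      (integrable_stdphi.integrableOn)]
  have : Function.support stdphi = Set.univ := by
    ext t; simp [(stdphi_pos t).ne']
  rw [this, Set.univ_inter, Real.volume_Ioi]
  simp

lemma Phibar_eq (x : ℝ) : Phibar x = Phibar 0 - ∫ t in (0:ℝ)..x, stdphi t := by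
  have h1 : ∀ y : ℝ, Phibar y = (∫ t, stdphi t) - ∫ t in Set.Iic y, stdphi t := by
    intro y
    rw [← intervalIntegral.integral_Iic_add_Ioi integrable_stdphi.integrableOn integrable_stdphi.integrableOn]
    unfold Phibar; ring
  rw [h1, h1 0, ← intervalIntegral.integral_Iic_sub_Iic integrable_stdphi.integrableOn
      integrable_stdphi.integrableOn]
  ring

lemma hasDerivAt_Phibar (x : ℝ) : HasDerivAt Phibar (-stdphi x) x := by
  have h : HasDerivAt (fun u => ∫ t in (0:ℝ)..u, stdphi t) (stdphi x) x :=
    intervalIntegral.integral_hasDerivAt_right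
      integrable_stdphi.intervalIntegrable
      (contDiff_stdphi.continuous.stronglyMeasurableAtFilter _ _)
      contDiff_stdphi.continuous.continuousAt
  have := (hasDerivAt_const x (Phibar 0)).sub h
  simpa [← Phibar_eq, Pi.sub_def] using this

lemma contDiff_Phibar : ContDiff ℝ 2 Phibar := by
  rw [show (2 : WithTop ℕ∞) = 1 + 1 by norm_num, contDiff_succ_iff_deriv]
  refine ⟨fun x => (hasDerivAt_Phibar x).differentiableAt, by simp, ?_⟩
  have : deriv Phibar = fun x => -stdphi x := funext fun x => (hasDerivAt_Phibar x).deriv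
  rw [this]
  exact (contDiff_stdphi.of_le (by norm_num)).neg

lemma quad_bound (f : ℝ × ℝ → ℝ) (hf : ContDiff ℝ 2 f) (h0 : f 0 = 0)
    (hd : fderiv ℝ f 0 = 0) :
    ∃ δ K : ℝ, 0 < δ ∧ 0 < K ∧ ∀ ε : ℝ × ℝ, ‖ε‖ ^ 2 < δ → |f ε| ≤ K * ‖ε‖ ^ 2 := by
  have hg : ContDiffAt ℝ 1 (fderiv ℝ f) 0 :=
    (hf.fderiv_right (le_refl (2 : WithTop ℕ∞))).contDiffAt
  obtain ⟨K, t, ht, hlip⟩ := hg.exists_lipschitzOnWith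
  obtain ⟨r, hr, hball⟩ := Metric.mem_nhds_iff.mp ht
  refine ⟨(r / 2) ^ 2, (K : ℝ) + 1, by positivity, by positivity, ?_⟩
  intro ε hε
  have hεr : ‖ε‖ ≤ r / 2 := by nlinarith [norm_nonneg ε]
  have hsub : Metric.closedBall (0 : ℝ × ℝ) ‖ε‖ ⊆ t :=
    (Metric.closedBall_subset_ball (lt_of_le_of_lt hεr (by linarith))).trans hball
  have h0mem : (0 : ℝ × ℝ) ∈ Metric.closedBall (0 : ℝ × ℝ) ‖ε‖ :=
    Metric.mem_closedBall_self (norm_nonneg ε)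
  have hεmem : ε ∈ Metric.closedBall (0 : ℝ × ℝ) ‖ε‖ := by
    simp [Metric.mem_closedBall]
  have key := (convex_closedBall (0 : ℝ × ℝ) ‖ε‖).norm_image_sub_le_of_norm_hasFDerivWithin_le'
      (f' := fderiv ℝ f) (φ := 0) (C := (K : ℝ) * ‖ε‖) (f := f)
      (fun z _ => (hf.differentiable (by norm_num) z).hasFDerivAt.hasFDerivWithinAt)
      (fun z hz => by
        have h1 := hlip.dist_le_mul z (hsub hz) 0 (hsub h0mem)
        rw [dist_eq_norm, hd, sub_zero, dist_zero_right] at h1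
        rw [sub_zero]
        calc ‖fderiv ℝ f z‖ ≤ (K : ℝ) * ‖z‖ := h1
        _ ≤ (K : ℝ) * ‖ε‖ := by
            have := Metric.mem_closedBall.mp hz
            rw [dist_zero_right] at this
            exact mul_le_mul_of_nonneg_left this K.2)
      h0mem hεmem
  rw [h0, sub_zero, sub_zero] at key
  simp only [ContinuousLinearMap.zero_apply, sub_zero] at key
  have : |f ε| ≤ (K : ℝ) * ‖ε‖ * ‖ε‖ := by simpa using key
  nlinarith [norm_nonneg ε, sq_nonneg ‖ε‖]

/-- Auxiliary lemma on ratios of normal tail probabilities: with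
`A = Φ̄(x₁)φ(x₂)/(φ(x₁)Φ̄(x₂))`, the difference
`Φ̄(x₁+ε₁)/Φ̄(x₂+ε₂) − Φ̄(x₁+ε₁−Aε₂)/Φ̄(x₂)` is `O(ε₁² + ε₂²)` as
`(ε₁,ε₂) → (0,0)`. -/
theorem stmt_9 (x₁ x₂ : ℝ) :
    ∃ δ K : ℝ, 0 < δ ∧ 0 < K ∧ ∀ ε₁ ε₂ : ℝ, ε₁ ^ 2 + ε₂ ^ 2 < δ →
      |Phibar (x₁ + ε₁) / Phibar (x₂ + ε₂)
        - Phibar (x₁ + ε₁ - (Phibar x₁ * stdphi x₂ / (stdphi x₁ * Phibar x₂)) * ε₂)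
          / Phibar x₂| ≤ K * (ε₁ ^ 2 + ε₂ ^ 2) := by
  set A : ℝ := Phibar x₁ * stdphi x₂ / (stdphi x₁ * Phibar x₂) with hA
  set f : ℝ × ℝ → ℝ := fun ε =>
    Phibar (x₁ + ε.1) * (Phibar (x₂ + ε.2))⁻¹
      - Phibar (x₁ + ε.1 - A * ε.2) * (Phibar x₂)⁻¹ with hf
  have hcd : ContDiff ℝ 2 f := by
    have h1 : ContDiff ℝ 2 (fun ε : ℝ × ℝ => Phibar (x₁ + ε.1)) :=
      contDiff_Phibar.comp (contDiff_const.add contDiff_fst)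
    have h2 : ContDiff ℝ 2 (fun ε : ℝ × ℝ => Phibar (x₂ + ε.2)) :=
      contDiff_Phibar.comp (contDiff_const.add contDiff_snd)
    have h3 : ContDiff ℝ 2 (fun ε : ℝ × ℝ => Phibar (x₁ + ε.1 - A * ε.2)) :=
      contDiff_Phibar.comp ((contDiff_const.add contDiff_fst).sub
        (contDiff_const.mul contDiff_snd))
    exact (h1.mul (h2.inv fun ε => (Phibar_pos _).ne')).sub (h3.mul contDiff_const)
  have hf0 : f 0 = 0 := by simp [hf]
  have hu : HasFDerivAt (fun ε : ℝ × ℝ => x₁ + ε.1)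
      (ContinuousLinearMap.fst ℝ ℝ ℝ) 0 := (hasFDerivAt_fst).const_add x₁
  have hv : HasFDerivAt (fun ε : ℝ × ℝ => x₂ + ε.2)
      (ContinuousLinearMap.snd ℝ ℝ ℝ) 0 := (hasFDerivAt_snd).const_add x₂
  have hw : HasFDerivAt (fun ε : ℝ × ℝ => x₁ + ε.1 - A * ε.2)
      (ContinuousLinearMap.fst ℝ ℝ ℝ - A • ContinuousLinearMap.snd ℝ ℝ ℝ) 0 :=
    ((hasFDerivAt_fst).const_add x₁).sub ((hasFDerivAt_snd).const_mul A)
  have hP1 : HasFDerivAt (fun ε : ℝ × ℝ => Phibar (x₁ + ε.1))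
      ((-stdphi (x₁ + (0 : ℝ × ℝ).1)) • ContinuousLinearMap.fst ℝ ℝ ℝ) 0 :=
    HasDerivAt.comp_hasFDerivAt (hf := hu) (x := 0) (hh := hasDerivAt_Phibar _)
  have hP2 : HasFDerivAt (fun ε : ℝ × ℝ => Phibar (x₂ + ε.2))
      ((-stdphi (x₂ + (0 : ℝ × ℝ).2)) • ContinuousLinearMap.snd ℝ ℝ ℝ) 0 :=
    HasDerivAt.comp_hasFDerivAt (hf := hv) (x := 0) (hh := hasDerivAt_Phibar _)
  have hP3 : HasFDerivAt (fun ε : ℝ × ℝ => Phibar (x₁ + ε.1 - A * ε.2))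
      ((-stdphi (x₁ + (0 : ℝ × ℝ).1 - A * (0 : ℝ × ℝ).2)) •
        (ContinuousLinearMap.fst ℝ ℝ ℝ - A • ContinuousLinearMap.snd ℝ ℝ ℝ)) 0 :=
    HasDerivAt.comp_hasFDerivAt (hf := hw) (x := 0) (hh := hasDerivAt_Phibar _)
  have hInv : HasFDerivAt (fun ε : ℝ × ℝ => (Phibar (x₂ + ε.2))⁻¹)
      ((-(Phibar (x₂ + (0 : ℝ × ℝ).2) ^ 2)⁻¹) •
        ((-stdphi (x₂ + (0 : ℝ × ℝ).2)) • ContinuousLinearMap.snd ℝ ℝ ℝ)) 0 :=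
    HasDerivAt.comp_hasFDerivAt (hf := hP2) (x := 0)
      (hh := hasDerivAt_inv (Phibar_pos _).ne')
  have hC : HasFDerivAt (fun _ : ℝ × ℝ => (Phibar x₂)⁻¹)
      (0 : ℝ × ℝ →L[ℝ] ℝ) 0 := hasFDerivAt_const _ _
  have htot := (hP1.mul hInv).sub (hP3.mul hC)
  have hzero : fderiv ℝ f 0 = 0 := by
    rw [hf, HasFDerivAt.fderiv (f := fun ε : ℝ × ℝ => Phibar (x₁ + ε.1) * (Phibar (x₂ + ε.2))⁻¹
        - Phibar (x₁ + ε.1 - A * ε.2) * (Phibar x₂)⁻¹) htot]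
    have hpx1 := (stdphi_pos x₁).ne'
    have hP2' := (Phibar_pos x₂).ne'
    refine ContinuousLinearMap.ext fun v => ?_
    simp only [ContinuousLinearMap.add_apply, ContinuousLinearMap.sub_apply,
      ContinuousLinearMap.smul_apply, ContinuousLinearMap.coe_fst',
      ContinuousLinearMap.coe_snd', ContinuousLinearMap.zero_apply, smul_eq_mul,
      Prod.fst_zero, Prod.snd_zero, add_zero, mul_zero, sub_zero, neg_mul, mul_neg,
      neg_neg, zero_add, smul_zero]
    rw [hA]
    field_simp
    ring
  obtain ⟨δ, K, hδ, hK, hbound⟩ := quad_bound f hcd hf0 hzero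
  refine ⟨min δ 1, K, lt_min hδ one_pos, hK, fun ε₁ ε₂ hε => ?_⟩
  have hnorm : ‖(ε₁, ε₂)‖ ^ 2 ≤ ε₁ ^ 2 + ε₂ ^ 2 := by
    rw [Prod.norm_def]
    rcases max_cases ‖ε₁‖ ‖ε₂‖ with ⟨h, _⟩ | ⟨h, _⟩ <;> rw [h] <;>
      simp only [Real.norm_eq_abs, sq_abs] <;> nlinarith [sq_nonneg ε₁, sq_nonneg ε₂]
  have h1 := hbound (ε₁, ε₂) (lt_of_le_of_lt hnorm (lt_of_lt_of_le hε (min_le_left _ _)))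
  have h2 : |f (ε₁, ε₂)| ≤ K * (ε₁ ^ 2 + ε₂ ^ 2) :=
    h1.trans (by nlinarith [sq_nonneg ‖(ε₁, ε₂)‖, abs_nonneg (f (ε₁, ε₂))])
  rw [hf] at h2
  simpa [div_eq_mul_inv, hA] using h2
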